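/- arXiv:math/0207287 — 4 statements merged into one kernel-verified Lean document; each statement's English description precedes it below -/
import Mathlib

section
/- Let T be a finite-dimensional complex vector space and let A be a linear subspace of the space of symmetric bilinear forms on T. Suppose q ∈ A has maximal rank among all elements of A, i.e. rank(Q) ≤ rank(q) for every Q ∈ A. Then Sing(q) ⊆ Base(A): every v ∈ T with q(v,w) = 0 for all w ∈ T satisfies Q(v,v) = 0 for every Q ∈ A. -/
open Module Polynomial

/-- Lower semicontinuity of rank: perturbing `f` by `t • g` for a suitable `t ≠ 0`
does not decrease the rank. -/
lemma rank_semicontinuous {V W : Type*} [AddCommGroup V] [Module ℂ V]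
    [AddCommGroup W] [Module ℂ W] [FiniteDimensional ℂ W]
    (f g : V →ₗ[ℂ] W) :
    ∃ t : ℂ, t ≠ 0 ∧
      Module.finrank ℂ (LinearMap.range f) ≤
        Module.finrank ℂ (LinearMap.range (f + t • g)) := by
  set r := Module.finrank ℂ (LinearMap.range f) with hr
  -- choose a basis of the range and preimages
  let b : Basis (Fin r) ℂ (LinearMap.range f) := finBasis ℂ (LinearMap.range f)
  have hmem : ∀ i, (b i : W) ∈ LinearMap.range f := fun i => (b i).2
  choose u hu using fun i => hmem i
  have hfu : ∀ i, f (u i) = (b i : W) := hu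
  -- a projection onto the range, giving dual functionals
  obtain ⟨Co, hC⟩ := (LinearMap.range f).exists_isCompl
  let π := Submodule.projectionOnto _ _ hC
  let ε : Fin r → (W →ₗ[ℂ] ℂ) := fun i => (b.coord i).comp π
  have hε : ∀ i j, ε i (f (u j)) = if i = j then 1 else 0 := by
    intro i j
    simp only [ε, LinearMap.comp_apply, hfu]
    rw [show π (b j : W) = b j from Submodule.projectionOnto_apply_left hC (b j)]
    simp [Module.Basis.coord_apply, Module.Basis.repr_self, Finsupp.single_apply, eq_comm]
  -- the determinant polynomial
  let P : Matrix (Fin r) (Fin r) ℂ[X] :=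
    fun i j => Polynomial.C (ε i (f (u j))) + Polynomial.X * Polynomial.C (ε i (g (u j)))
  have heval : ∀ t : ℂ, Polynomial.eval t P.det =
      Matrix.det (fun i j => ε i ((f + t • g) (u j))) := by
    intro t
    have h := RingHom.map_det (Polynomial.evalRingHom t) P
    rw [show Polynomial.eval t P.det = (Polynomial.evalRingHom t) P.det from rfl, h]
    congr 1
    funext i j
    show Polynomial.eval t (Polynomial.C ((ε i) (f (u j))) + Polynomial.X * Polynomial.C ((ε i) (g (u j)))) = (ε i) ((f + t • g) (u j))
    simp only [Polynomial.eval_add, Polynomial.eval_mul, Polynomial.eval_C, Polynomial.eval_X,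
      LinearMap.add_apply, LinearMap.smul_apply, map_add, map_smul, smul_eq_mul]
  have h0 : Polynomial.eval 0 P.det = 1 := by
    rw [heval 0]
    have : (fun i j => ε i ((f + (0:ℂ) • g) (u j))) = (1 : Matrix (Fin r) (Fin r) ℂ) := by
      ext i j
      simp [hε, Matrix.one_apply]
    rw [this, Matrix.det_one]
  have hP0 : P.det ≠ 0 := fun h => by simp [h] at h0
  -- pick t ≠ 0 which is not a root
  have hfin : Set.Finite ({x | Polynomial.IsRoot P.det x} ∪ {0}) :=
    (Polynomial.finite_setOf_isRoot hP0).union (Set.finite_singleton 0)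
  obtain ⟨t, ht⟩ := hfin.infinite_compl.nonempty
  rw [Set.mem_compl_iff, Set.mem_union, not_or] at ht
  obtain ⟨htroot, ht0⟩ := ht
  refine ⟨t, by simpa using ht0, ?_⟩
  -- the perturbed vectors are linearly independent
  have hdet : Matrix.det (fun i j => ε i ((f + t • g) (u j))) ≠ 0 := by
    rw [← heval t]; exact htroot
  have hind : LinearIndependent ℂ fun j => (f + t • g) (u j) := by
    rw [Fintype.linearIndependent_iff]
    intro c hc i
    have hmv : (Matrix.of fun i j => ε i ((f + t • g) (u j))).mulVec c = 0 := by
      funext i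
      have h2 := congrArg (ε i) hc
      simp only [map_sum, map_smul, map_zero, smul_eq_mul] at h2
      simp only [Matrix.mulVec, dotProduct, Matrix.of_apply, Pi.zero_apply]
      rw [← h2]
      exact Finset.sum_congr rfl fun j _ => by ring
    have hinj : Function.Injective
        (Matrix.of fun i j => ε i ((f + t • g) (u j))).mulVec := by
      rw [Matrix.mulVec_injective_iff_isUnit, Matrix.isUnit_iff_isUnit_det]
      exact (isUnit_iff_ne_zero).mpr hdet
    have : c = 0 := by
      apply hinj
      simpa using hmv
    simp [this]
  -- conclude
  calc r = Module.finrank ℂ (Submodule.span ℂ (Set.range fun j => (f + t • g) (u j))) :=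
        (finrank_span_eq_card hind).symm ▸ (by simp)
    _ ≤ Module.finrank ℂ (LinearMap.range (f + t • g)) := by
        apply Submodule.finrank_mono
        rw [Submodule.span_le]
        rintro _ ⟨j, rfl⟩
        exact LinearMap.mem_range_self _ _

/-- The rank of a bilinear form on `T`: the rank of the induced linear map
`T → T*`, `v ↦ q(v,·)`. -/
noncomputable def bilinRank {T : Type*} [AddCommGroup T] [Module ℂ T]
    (q : T →ₗ[ℂ] T →ₗ[ℂ] ℂ) : ℕ :=
  Module.finrank ℂ (LinearMap.range q)

/-- Classical Bertini: if `q` has maximal rank in a linear system `A` of symmetric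
bilinear forms on a finite-dimensional complex vector space, then every singular
vector of `q` lies in the base locus of `A`. -/
theorem bertini_max_rank {T : Type*} [AddCommGroup T] [Module ℂ T]
    [FiniteDimensional ℂ T]
    (A : Submodule ℂ (T →ₗ[ℂ] T →ₗ[ℂ] ℂ))
    (hsymm : ∀ Q ∈ A, ∀ v w : T, Q v w = Q w v)
    (q : T →ₗ[ℂ] T →ₗ[ℂ] ℂ) (hq : q ∈ A)
    (hmax : ∀ Q ∈ A, bilinRank Q ≤ bilinRank q)
    (v : T) (hv : ∀ w : T, q v w = 0) :
    ∀ Q ∈ A, Q v v = 0 := by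
  by_contra hcon
  push_neg at hcon
  obtain ⟨Q, hQA, hQv⟩ := hcon
  have hqv : q v = 0 := LinearMap.ext hv
  -- the hyperplane K = ker (Q v)
  set K : Submodule ℂ T := LinearMap.ker (Q v) with hK
  let f : K →ₗ[ℂ] (T →ₗ[ℂ] ℂ) := q.comp K.subtype
  let g : K →ₗ[ℂ] (T →ₗ[ℂ] ℂ) := Q.comp K.subtype
  -- range f = range q
  have hrange : LinearMap.range f = LinearMap.range q := by
    apply le_antisymm
    · rintro _ ⟨k, rfl⟩
      exact ⟨k, rfl⟩
    · rintro _ ⟨w, rfl⟩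
      set c : ℂ := Q v w / Q v v with hc
      have hk : w - c • v ∈ K := by
        simp only [hK, LinearMap.mem_ker, map_sub, map_smul]
        rw [hc, smul_eq_mul, div_mul_cancel₀ _ hQv, sub_self]
      refine ⟨⟨w - c • v, hk⟩, ?_⟩
      simp [f, map_sub, map_smul, hqv]
  obtain ⟨t, ht0, htrank⟩ := rank_semicontinuous f g
  set P : T →ₗ[ℂ] T →ₗ[ℂ] ℂ := q + t • Q with hP
  have hPA : P ∈ A := A.add_mem hq (A.smul_mem t hQA)
  have hfg : f + t • g = P.comp K.subtype := by
    ext k w; simp [f, g, P]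
  -- range of the restriction sits strictly inside range P
  have hle : LinearMap.range (P.comp K.subtype) ≤ LinearMap.range P := by
    rintro _ ⟨k, rfl⟩; exact ⟨k, rfl⟩
  have hPvv : P v v ≠ 0 := by
    simp only [hP, LinearMap.add_apply, LinearMap.smul_apply, smul_eq_mul, hqv]
    simpa [hv] using mul_ne_zero ht0 hQv
  have hnmem : P v ∉ LinearMap.range (P.comp K.subtype) := by
    rintro ⟨k, hk⟩
    apply hPvv
    have hkv : Q v (k : T) = 0 := k.2
    have hsymP : P (k : T) v = P v (k : T) := hsymm P hPA _ _
    have : P v v = P (k : T) v := by rw [← hk]; rfl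
    rw [this, hsymP]
    simp only [hP, LinearMap.add_apply, LinearMap.smul_apply, smul_eq_mul, hqv]
    simp [hv, hkv]
  have hlt : LinearMap.range (P.comp K.subtype) < LinearMap.range P :=
    lt_of_le_of_ne hle (fun h => hnmem (h ▸ LinearMap.mem_range_self _ _))
  have hstep : bilinRank q < bilinRank P := by
    calc bilinRank q = Module.finrank ℂ (LinearMap.range f) := by
          rw [bilinRank, hrange]
      _ ≤ Module.finrank ℂ (LinearMap.range (P.comp K.subtype)) := by
          rw [← hfg]; exact htrank
      _ < Module.finrank ℂ (LinearMap.range P) := Submodule.finrank_lt_finrank_of_lt hlt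
  exact absurd (hmax P hPA) (not_le.mpr hstep)
end

section
/- Let q and Q be symmetric bilinear forms on a finite-dimensional complex vector space T, and suppose v ∈ T satisfies q(v,w) = 0 for all w ∈ T while Q(v,v) ≠ 0. Then there exists t ∈ ℂ such that rank(q + t·Q) > rank(q). -/
open Module Polynomial Matrix

/-- If the restriction of a bilinear form to a subspace is nondegenerate, the rank of the
form is at least the dimension of the subspace. -/
lemma rank_ge_of_nondeg_restrict {T : Type*} [AddCommGroup T] [Module ℂ T]
    [FiniteDimensional ℂ T] (B : T →ₗ[ℂ] T →ₗ[ℂ] ℂ) (W : Submodule ℂ T)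
    (h : (LinearMap.BilinForm.restrict B W).Nondegenerate) :
    Module.finrank ℂ W ≤ bilinRank B := by
  have hker : LinearMap.ker (LinearMap.BilinForm.restrict B W) = ⊥ := h.ker_eq_bot
  have h1 : Module.finrank ℂ (LinearMap.range (LinearMap.BilinForm.restrict B W))
      = Module.finrank ℂ W := by
    have := LinearMap.finrank_range_add_finrank_ker (LinearMap.BilinForm.restrict B W)
    rw [hker] at this
    simpa using this
  have heq : LinearMap.BilinForm.restrict B W
      = (LinearMap.lcomp ℂ ℂ W.subtype).comp (B.comp W.subtype) := by
    ext x y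
    rfl
  rw [← h1, heq]
  calc Module.finrank ℂ (LinearMap.range ((LinearMap.lcomp ℂ ℂ W.subtype).comp (B.comp W.subtype)))
      = Module.finrank ℂ (Submodule.map (LinearMap.lcomp ℂ ℂ W.subtype)
          (LinearMap.range (B.comp W.subtype))) := by rw [LinearMap.range_comp]
    _ ≤ Module.finrank ℂ (LinearMap.range (B.comp W.subtype)) :=
        Submodule.finrank_map_le _ _
    _ ≤ Module.finrank ℂ (LinearMap.range B) :=
        Submodule.finrank_mono (LinearMap.range_comp_le_range _ _)

/-- Rank-jump: if `v` is a singular vector of the symmetric bilinear form `q`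
but `Q(v,v) ≠ 0`, then some form `q + t • Q` in the pencil through `q` in the
direction of `Q` has rank strictly larger than that of `q`. -/
theorem rank_jump {T : Type*} [AddCommGroup T] [Module ℂ T]
    [FiniteDimensional ℂ T]
    (q Q : T →ₗ[ℂ] T →ₗ[ℂ] ℂ)
    (hq : ∀ v w : T, q v w = q w v) (hQ : ∀ v w : T, Q v w = Q w v)
    (v : T) (hv : ∀ w : T, q v w = 0) (hQv : Q v v ≠ 0) :
    ∃ t : ℂ, bilinRank q < bilinRank (q + t • Q) := by
  classical
  have hvK : v ∈ LinearMap.ker q := by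
    rw [LinearMap.mem_ker]; ext w; exact hv w
  obtain ⟨W, hWc⟩ := Submodule.exists_isCompl (LinearMap.ker q)
  set r := Module.finrank ℂ W with hrdef
  let b0 : Basis (Fin r) ℂ W := Module.finBasis ℂ W
  let b : Fin r → T := fun i => (b0 i : T)
  have hvne : v ≠ 0 := fun h => hQv (by simp [h])
  -- q(b i, v) = 0 and q(v, b i) = 0
  have hqv : ∀ w : T, q w v = 0 := fun w => (hq w v).trans (hv w)
  -- span of b is W
  have hspanb : Submodule.span ℂ (Set.range b) = W := by
    have : Set.range b = W.subtype '' Set.range b0 := by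
      ext x; simp [b, Set.mem_image]
    rw [this, ← Submodule.map_span, b0.span_eq, Submodule.map_top, Submodule.range_subtype]
  have hlib : LinearIndependent ℂ b :=
    b0.linearIndependent.map' W.subtype (Submodule.ker_subtype W)
  have hliv : LinearIndependent ℂ (fun _ : Unit => v) := linearIndependent_unique_iff.mpr hvne
  have hdisj : Disjoint (Submodule.span ℂ (Set.range b))
      (Submodule.span ℂ (Set.range fun _ : Unit => v)) := by
    rw [hspanb]
    refine Disjoint.mono_right ?_ hWc.symm.disjoint
    rw [Set.range_const, Submodule.span_le, Set.singleton_subset_iff]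
    exact hvK
  set e : Fin r ⊕ Unit → T := Sum.elim b (fun _ => v) with hedef
  have hle : LinearIndependent ℂ e := linearIndependent_sum.2 ⟨hlib, hliv, hdisj⟩
  set W' := Submodule.span ℂ (Set.range e) with hW'def
  let bW' : Basis (Fin r ⊕ Unit) ℂ W' := Module.Basis.span hle
  have hbW' : ∀ i, (bW' i : T) = e i := fun i => congrArg Subtype.val (Module.Basis.span_apply hle i)
  have hW'rank : Module.finrank ℂ W' = r + 1 := by
    rw [finrank_span_eq_card hle]
    simp
  -- q restricted to W is nondegenerate
  have hWnd : (LinearMap.BilinForm.restrict q W).Nondegenerate := by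
    refine LinearMap.BilinForm.Nondegenerate.ofSeparatingLeft ?_
    rintro ⟨w, hw⟩ h
    have hall : ∀ u : T, q w u = 0 := by
      intro u
      have hu : u ∈ LinearMap.ker q ⊔ W := by rw [hWc.sup_eq_top]; trivial
      obtain ⟨k, hk, x, hx, rfl⟩ := Submodule.mem_sup.mp hu
      have h1 : q w k = 0 := by
        rw [hq w k]
        rw [LinearMap.mem_ker] at hk
        simp [hk]
      have h2 : q w x = 0 := h ⟨x, hx⟩
      simp [map_add, h1, h2]
    have hwk : w ∈ LinearMap.ker q := by
      rw [LinearMap.mem_ker]; ext u; exact hall u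
    have : w ∈ (LinearMap.ker q) ⊓ W := ⟨hwk, hw⟩
    rw [hWc.inf_eq_bot] at this
    exact Subtype.ext this
  -- the Gram matrix A of q on W has nonzero determinant
  have hdetA : (LinearMap.BilinForm.toMatrix b0 (LinearMap.BilinForm.restrict q W)).det ≠ 0 :=
    (LinearMap.BilinForm.nondegenerate_iff_det_ne_zero b0).mp hWnd
  set A : Matrix (Fin r) (Fin r) ℂ := LinearMap.BilinForm.toMatrix b0
    (LinearMap.BilinForm.restrict q W) with hAdef
  have hA : ∀ i j, A i j = q (b i) (b j) := by
    intro i j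
    rw [hAdef, LinearMap.BilinForm.toMatrix_apply]
    rfl
  -- the polynomial matrix
  set P : Matrix (Fin r ⊕ Unit) (Fin r ⊕ Unit) ℂ[X] :=
    Matrix.fromBlocks (fun i j => C (q (b i) (b j)) + X * C (Q (b i) (b j)))
      (fun i _ => X * C (Q (b i) v)) (fun _ j => C (Q v (b j)))
      (fun _ _ => C (Q v v)) with hPdef
  set g : ℂ[X] := P.det with hgdef
  have hg0 : g.eval 0 = A.det * Q v v := by
    have h1 : g.eval 0 = (P.map (evalRingHom 0)).det := by
      have h := RingHom.map_det (evalRingHom 0) P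
      rw [RingHom.mapMatrix_apply] at h
      simpa [hgdef] using h
    have hPmap : P.map (evalRingHom 0) = Matrix.fromBlocks A (0 : Matrix (Fin r) Unit ℂ)
        (fun _ j => Q v (b j)) (fun _ _ => Q v v) := by
      ext i j
      rcases i with i | u <;> rcases j with j | u' <;>
        simp [hPdef, Matrix.map_apply, hA, Matrix.fromBlocks]
    rw [h1, hPmap]; refine (Matrix.det_fromBlocks_zero₁₂ A _ _).trans ?_
    congr 1
    exact Matrix.det_unique _
  have hgne : g ≠ 0 := by
    intro h
    rw [h] at hg0
    exact mul_ne_zero (by simpa using hdetA) hQv (by simpa using hg0.symm)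
  have hXg : X * g ≠ 0 := mul_ne_zero X_ne_zero hgne
  obtain ⟨t, ht⟩ : ∃ t : ℂ, (X * g).eval t ≠ 0 := by
    apply Polynomial.exists_eval_ne_zero_of_natDegree_lt_card _ hXg
    exact lt_of_lt_of_le (Cardinal.nat_lt_aleph0 _) (Cardinal.aleph0_le_mk ℂ)
  rw [Polynomial.eval_mul, Polynomial.eval_X] at ht
  refine ⟨t, ?_⟩
  set q' : T →ₗ[ℂ] T →ₗ[ℂ] ℂ := q + t • Q with hq'def
  have hq'app : ∀ x y : T, q' x y = q x y + t * Q x y := fun x y => by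
    simp [hq'def]
  -- Gram matrix of q' on W'
  set M : Matrix (Fin r ⊕ Unit) (Fin r ⊕ Unit) ℂ :=
    LinearMap.BilinForm.toMatrix bW' (LinearMap.BilinForm.restrict q' W') with hMdef
  have hM : ∀ i j, M i j = q' (e i) (e j) := by
    intro i j
    rw [hMdef, LinearMap.BilinForm.toMatrix_apply]
    show q' (bW' i : T) (bW' j : T) = _
    rw [hbW' i, hbW' j]
  have hMeq : M = Matrix.updateRow (P.map (eval t)) (Sum.inr ())
      (t • (P.map (eval t)) (Sum.inr ())) := by
    ext i j
    rcases i with i | u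
    · rw [Matrix.updateRow_ne (by simp)]
      rcases j with j | u'
      · rw [hM]; simp [hPdef, Matrix.map_apply, hq'app, e, Matrix.fromBlocks]
        try ring
      · rw [hM]
        simp [hPdef, Matrix.map_apply, hq'app, e, hqv, Matrix.fromBlocks]
        try ring
    · rw [Matrix.updateRow_self]
      rcases j with j | u'
      · rw [hM]
        simp [hPdef, Matrix.map_apply, hq'app, e, hv, Matrix.fromBlocks]
        try ring
      · rw [hM]
        simp [hPdef, Matrix.map_apply, hq'app, e, hv, Matrix.fromBlocks]
        try ring
  have hdetM : M.det ≠ 0 := by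
    rw [hMeq, Matrix.det_updateRow_smul, Matrix.updateRow_eq_self]
    have h2 : (P.map (eval t)).det = g.eval t := by
      have h := RingHom.map_det (evalRingHom t) P
      rw [RingHom.mapMatrix_apply] at h
      simpa [hgdef] using h.symm
    rw [h2]
    exact ht
  have hnd : (LinearMap.BilinForm.restrict q' W').Nondegenerate :=
    (LinearMap.BilinForm.nondegenerate_iff_det_ne_zero bW').mpr (hMdef ▸ hdetM)
  have hge : Module.finrank ℂ W' ≤ bilinRank q' := rank_ge_of_nondeg_restrict q' W' hnd
  -- bilinRank q = r
  have hbq : bilinRank q = r := by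
    have h1 := LinearMap.finrank_range_add_finrank_ker q
    have h2 := Submodule.finrank_add_eq_of_isCompl hWc
    unfold bilinRank
    omega
  rw [hbq]
  calc r < r + 1 := Nat.lt_succ_self r
    _ = Module.finrank ℂ W' := hW'rank.symm
    _ ≤ bilinRank q' := hge
end

section
/- Let T be a finite-dimensional complex vector space and let A be a nonzero linear subspace of the space of symmetric bilinear forms on T. Then there exists a dense open subset U ⊆ A such that for every q ∈ U, Sing(q) ⊆ Base(A), i.e. every v ∈ T with q(v,w) = 0 for all w ∈ T satisfies Q(v,v) = 0 for every Q ∈ A. -/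
open Matrix Polynomial

namespace Bertini

variable {T : Type*} [NormedAddCommGroup T] [NormedSpace ℂ T] [FiniteDimensional ℂ T]

noncomputable def gram (q : T →L[ℂ] T →L[ℂ] ℂ) {ι : Type*} (w : ι → T) : Matrix ι ι ℂ :=
  Matrix.of fun i j => q (w i) (w j)

lemma le_finrank_of_det_gram_ne_zero {m : ℕ} (q : T →L[ℂ] T →L[ℂ] ℂ) (w : Fin m → T)
    (h : (gram q w).det ≠ 0) : m ≤ Module.finrank ℂ T := by
  have hw : LinearIndependent ℂ w := by
    rw [Fintype.linearIndependent_iff]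
    intro c hc
    have hv : Matrix.vecMul c (gram q w) = 0 := by
      funext j
      have h2 : (q (∑ i, c i • w i)) (w j) = 0 := by rw [hc]; simp
      simp only [map_sum, _root_.map_smul, ContinuousLinearMap.sum_apply,
        ContinuousLinearMap.smul_apply, smul_eq_mul] at h2
      simpa [Matrix.vecMul, dotProduct, gram] using h2
    have h3 := Matrix.eq_zero_of_vecMul_eq_zero h hv
    intro i; exact congrFun h3 i
  simpa using hw.fintype_card_le_finrank

omit [FiniteDimensional ℂ T] in
lemma eval_cont (v u : T) : Continuous fun B : T →L[ℂ] T →L[ℂ] ℂ => B v u := by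
  have h1 : Continuous fun B : T →L[ℂ] T →L[ℂ] ℂ => B v :=
    (ContinuousLinearMap.apply ℂ (T →L[ℂ] ℂ) v).continuous
  exact (ContinuousLinearMap.apply ℂ ℂ u).continuous.comp h1

omit [FiniteDimensional ℂ T] in
set_option synthInstance.maxHeartbeats 1000000 in
set_option maxHeartbeats 1000000 in
lemma seg_cont (q0 q1 : T →L[ℂ] T →L[ℂ] ℂ) :
    Continuous fun t : ℂ => (1 - t) • q0 + t • q1 := by
  haveI h1 : ContinuousAdd (T →L[ℂ] T →L[ℂ] ℂ) :=
    ContinuousLinearMap.topologicalAddGroup.toContinuousAdd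
  haveI h2 : ContinuousSMul ℂ (T →L[ℂ] T →L[ℂ] ℂ) := ContinuousLinearMap.continuousSMul
  exact ((continuous_const.sub (continuous_id (X := ℂ))).smul
    (continuous_const : Continuous fun _ : ℂ => q0)).add
    ((continuous_id (X := ℂ)).smul (continuous_const : Continuous fun _ : ℂ => q1))

end Bertini

set_option maxHeartbeats 4000000 in
set_option synthInstance.maxHeartbeats 4000000 in
/-- Classical Bertini theorem for linear systems of quadrics: for a nonzero
linear system `A` of symmetric bilinear forms on a finite-dimensional complex
vector space, there is a dense open subset `U ⊆ A` such that for every `q ∈ U`,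
the singular locus of `q` is contained in the base locus of `A`. -/
theorem bertini_generic {T : Type*} [NormedAddCommGroup T]
    [NormedSpace ℂ T] [FiniteDimensional ℂ T]
    (A : Submodule ℂ (T →L[ℂ] T →L[ℂ] ℂ)) (hA : A ≠ ⊥)
    (hsymm : ∀ Q ∈ A, ∀ v w : T, Q v w = Q w v) :
    ∃ U : Set A, IsOpen U ∧ Dense U ∧
      ∀ q ∈ U, ∀ v : T, (∀ w : T, (q : T →L[ℂ] T →L[ℂ] ℂ) v w = 0) →
        ∀ Q ∈ A, Q v v = 0 := by
  classical
  set S : Set ℕ := {m | ∃ q ∈ A, ∃ w : Fin m → T, (Bertini.gram q w).det ≠ 0} with hSdef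
  have hbdd : BddAbove S := by
    refine ⟨Module.finrank ℂ T, ?_⟩
    rintro m ⟨q, _, w, hw⟩
    exact Bertini.le_finrank_of_det_gram_ne_zero q w hw
  have h0 : (0 : ℕ) ∈ S := ⟨0, A.zero_mem, Fin.elim0, by simp [Matrix.det_fin_zero]⟩
  set r := sSup S with hrdef
  have hrS : r ∈ S := Nat.sSup_mem ⟨0, h0⟩ hbdd
  obtain ⟨q1, hq1A, w1, hw1⟩ := hrS
  set U : Set A := {q | ∃ w : Fin r → T, (Bertini.gram (q : T →L[ℂ] T →L[ℂ] ℂ) w).det ≠ 0}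
    with hUdef
  refine ⟨U, ?_, ?_, ?_⟩
  · -- open
    have hU : U = ⋃ w : Fin r → T,
        (fun q : A => (Bertini.gram (q : T →L[ℂ] T →L[ℂ] ℂ) w).det) ⁻¹' {(0 : ℂ)}ᶜ := by
      ext q; simp [hUdef, Set.mem_iUnion]
    rw [hU]
    refine isOpen_iUnion fun w => IsOpen.preimage ?_ isOpen_compl_singleton
    refine Continuous.matrix_det (continuous_matrix fun i j => ?_)
    exact (Bertini.eval_cont (w i) (w j)).comp continuous_subtype_val
  · -- dense
    intro q0
    rw [mem_closure_iff_nhds]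
    intro s hs
    set γ : ℂ → A := fun t =>
      (⟨(1 - t) • (q0 : T →L[ℂ] T →L[ℂ] ℂ) + t • q1,
        A.add_mem (A.smul_mem _ q0.2) (A.smul_mem _ hq1A)⟩ : A) with hγ
    have hγc : Continuous γ :=
      Continuous.subtype_mk (Bertini.seg_cont (q0 : T →L[ℂ] T →L[ℂ] ℂ) q1) _
    have hγ0 : γ 0 = q0 := by
      rw [hγ]; ext1
      refine ContinuousLinearMap.ext fun x => ContinuousLinearMap.ext fun y => ?_
      simp only [ContinuousLinearMap.add_apply, ContinuousLinearMap.smul_apply, smul_eq_mul]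
      ring
    set a : Fin r → Fin r → ℂ := fun i j => (q0 : T →L[ℂ] T →L[ℂ] ℂ) (w1 i) (w1 j) with ha
    set b : Fin r → Fin r → ℂ := fun i j => q1 (w1 i) (w1 j) - a i j with hb
    set P : ℂ[X] := (Matrix.of fun i j => C (a i j) + X * C (b i j)).det with hP
    have heval : ∀ t, P.eval t =
        (Bertini.gram ((γ t : A) : T →L[ℂ] T →L[ℂ] ℂ) w1).det := by
      intro t
      have hmap := RingHom.map_det (Polynomial.evalRingHom t)
        (Matrix.of fun i j => C (a i j) + X * C (b i j))
      have : P.eval t = ((Polynomial.evalRingHom t).mapMatrix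
          (Matrix.of fun i j => C (a i j) + X * C (b i j))).det := hmap
      rw [this]
      congr 1
      ext i j
      simp only [RingHom.mapMatrix_apply, Matrix.map_apply, Matrix.of_apply, Bertini.gram, hγ,
        map_add, _root_.map_mul, Polynomial.eval_add, Polynomial.eval_mul, Polynomial.eval_C,
        Polynomial.eval_X, Polynomial.coe_evalRingHom]
      simp only [ContinuousLinearMap.add_apply, ContinuousLinearMap.smul_apply, smul_eq_mul, hb]
      ring
    have hP1 : P.eval 1 ≠ 0 := by
      rw [heval 1]
      have hγ1 : ((γ 1 : A) : T →L[ℂ] T →L[ℂ] ℂ) = q1 := by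
        rw [hγ]
        refine ContinuousLinearMap.ext fun x => ContinuousLinearMap.ext fun y => ?_
        simp only [ContinuousLinearMap.add_apply, ContinuousLinearMap.smul_apply, smul_eq_mul]
        ring
      rw [hγ1]; exact hw1
    have hPne : P ≠ 0 := fun h => hP1 (by rw [h]; simp)
    have hfin : {x : ℂ | P.IsRoot x}.Finite := Polynomial.finite_setOf_isRoot hPne
    have hnhds : γ ⁻¹' s ∈ nhds (0 : ℂ) := by
      have := hγc.continuousAt (x := (0 : ℂ))
      exact this.preimage_mem_nhds (by rw [hγ0]; exact hs)
    have hinf : (γ ⁻¹' s).Infinite := infinite_of_mem_nhds (0 : ℂ) hnhds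
    obtain ⟨t, ht⟩ := (hinf.diff hfin).nonempty
    refine ⟨γ t, ht.1, w1, ?_⟩
    rw [← heval t]
    exact fun h => ht.2 h
  · -- main statement
    rintro q ⟨w, hw⟩ v hv Q hQA
    by_contra hQv
    have hqA : (q : T →L[ℂ] T →L[ℂ] ℂ) ∈ A := q.2
    have hqv' : ∀ u, (q : T →L[ℂ] T →L[ℂ] ℂ) u v = 0 := fun u => by
      rw [hsymm _ hqA u v]; exact hv u
    set N : ℂ → Matrix (Fin r ⊕ Fin 1) (Fin r ⊕ Fin 1) ℂ := fun t =>
      Matrix.fromBlocks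
        (Matrix.of fun i j => (q : T →L[ℂ] T →L[ℂ] ℂ) (w i) (w j) + t * Q (w i) (w j))
        (Matrix.of fun i (_ : Fin 1) => t * Q (w i) v)
        (Matrix.of fun (_ : Fin 1) j => Q v (w j))
        (Matrix.of fun (_ _ : Fin 1) => Q v v) with hN
    have hNc : Continuous fun t => (N t).det := by
      refine Continuous.matrix_det (continuous_matrix ?_)
      rintro (i | i) (j | j) <;>
        simp only [hN, Matrix.fromBlocks_apply₁₁, Matrix.fromBlocks_apply₁₂,
          Matrix.fromBlocks_apply₂₁, Matrix.fromBlocks_apply₂₂, Matrix.of_apply] <;>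
        fun_prop
    have hN0 : (N 0).det ≠ 0 := by
      have hN0eq : N 0 = Matrix.fromBlocks (Bertini.gram (q : T →L[ℂ] T →L[ℂ] ℂ) w) 0
          (Matrix.of fun (_ : Fin 1) j => Q v (w j))
          (Matrix.of fun (_ _ : Fin 1) => Q v v) := by
        ext i j
        rcases i with i | i <;> rcases j with j | j <;> simp [hN, Bertini.gram]
      rw [hN0eq, Matrix.det_fromBlocks_zero₁₂]
      refine mul_ne_zero hw ?_
      rw [Matrix.det_fin_one]
      exact hQv
    obtain ⟨t, htne, ht0⟩ : ∃ t : ℂ, (N t).det ≠ 0 ∧ t ≠ 0 := by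
      have hopen : {t : ℂ | (N t).det ≠ 0} ∈ nhds (0 : ℂ) := by
        have : IsOpen {t : ℂ | (N t).det ≠ 0} := by
          have := hNc.isOpen_preimage {(0 : ℂ)}ᶜ isOpen_compl_singleton
          simpa [Set.preimage, Set.mem_compl_iff] using this
        exact this.mem_nhds hN0
      have hmem : {t : ℂ | (N t).det ≠ 0} ∈ nhdsWithin (0 : ℂ) {(0 : ℂ)}ᶜ :=
        mem_nhdsWithin_of_mem_nhds hopen
      obtain ⟨t, ht⟩ := Filter.nonempty_of_mem (Filter.inter_mem hmem self_mem_nhdsWithin)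
      exact ⟨t, ht.1, ht.2⟩
    -- build the (r+1)-tuple
    set q' : T →L[ℂ] T →L[ℂ] ℂ := (q : T →L[ℂ] T →L[ℂ] ℂ) + t • Q with hq'
    have hq'A : q' ∈ A := A.add_mem hqA (A.smul_mem _ hQA)
    set we : Fin r ⊕ Fin 1 → T := Sum.elim w (fun _ => v) with hwe
    set w' : Fin (r + 1) → T := we ∘ finSumFinEquiv.symm with hw'
    have hsub : Bertini.gram q' w' =
        (Matrix.of fun i j => q' (we i) (we j)).submatrix
          finSumFinEquiv.symm finSumFinEquiv.symm := by
      ext i j; simp [Bertini.gram, hw']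
    have hblocks : (Matrix.of fun i j => q' (we i) (we j)) =
        Matrix.updateRow (N t) (Sum.inr 0) (t • fun j => N t (Sum.inr 0) j) := by
      ext i j
      rcases i with i | i
      · rw [Matrix.updateRow_ne (by simp)]
        rcases j with j | j <;>
          simp [hN, hwe, hq', ContinuousLinearMap.add_apply, ContinuousLinearMap.smul_apply,
            smul_eq_mul, hqv']
      · have hi : i = 0 := Subsingleton.elim _ _
        subst hi
        rw [Matrix.updateRow_self]
        rcases j with j | j <;>
          simp [hN, hwe, hq', ContinuousLinearMap.add_apply, ContinuousLinearMap.smul_apply,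
            smul_eq_mul, hv]
    have hdet : (Bertini.gram q' w').det ≠ 0 := by
      rw [hsub, Matrix.det_submatrix_equiv_self, hblocks, Matrix.det_updateRow_smul,
        Matrix.updateRow_eq_self]
      exact mul_ne_zero ht0 htne
    have hmemS : r + 1 ∈ S := ⟨q', hq'A, w', hdet⟩
    have : r + 1 ≤ r := hrdef ▸ le_csSup hbdd hmemS
    omega
end

section
/- For every nonzero vector u ∈ ℂ⁵, the radical of the symmetric bilinear form b_u on Λ²ℂ⁵ (defined by u ∧ ω ∧ η = b_u(ω,η)·(e₁∧e₂∧e₃∧e₄∧e₅)) equals the 4-dimensional subspace u ∧ ℂ⁵ = {u ∧ w : w ∈ ℂ⁵}; in particular every element ω of this radical satisfies ω ∧ ω = 0, so the singular locus of every nonzero quadric in the Pfaffian system on Λ²ℂ⁵ is contained in the base locus of that system. -/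
open ExteriorAlgebra

/-- The generator `e₁ ∧ e₂ ∧ e₃ ∧ e₄ ∧ e₅` of `Λ⁵ℂ⁵`, where `e₁, …, e₅` is the
standard basis of `ℂ⁵ = Fin 5 → ℂ`. -/
noncomputable def topForm : ExteriorAlgebra ℂ (Fin 5 → ℂ) :=
  ι ℂ (Pi.single 0 1) * ι ℂ (Pi.single 1 1) * ι ℂ (Pi.single 2 1) *
    ι ℂ (Pi.single 3 1) * ι ℂ (Pi.single 4 1)

/-- The linear map `ℂ⁵ → Λ²ℂ⁵ ⊆ Λℂ⁵`, `w ↦ u ∧ w`, whose range is the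
subspace `u ∧ ℂ⁵`. -/
noncomputable def wedgeWith (u : Fin 5 → ℂ) :
    (Fin 5 → ℂ) →ₗ[ℂ] ExteriorAlgebra ℂ (Fin 5 → ℂ) :=
  (LinearMap.mulLeft ℂ (ι ℂ u)).comp (ι ℂ)

/-! ### Auxiliary machinery -/

/-- The linear functional on the exterior algebra extracting the top-degree
coefficient with respect to a basis `v`. -/
noncomputable def Fv (v : Module.Basis (Fin 5) ℂ (Fin 5 → ℂ)) :
    ExteriorAlgebra ℂ (Fin 5 → ℂ) →ₗ[ℂ] ℂ :=
  liftAlternating (fun i => match i with | 5 => v.det | _ => 0)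

theorem Fv_eval (v : Module.Basis (Fin 5) ℂ (Fin 5 → ℂ)) (x0 x1 x2 x3 x4 : Fin 5 → ℂ) :
    Fv v (ι ℂ x0 * (ι ℂ x1 * (ι ℂ x2 * (ι ℂ x3 * ι ℂ x4)))) = v.det ![x0,x1,x2,x3,x4] := by
  have h : ι ℂ x0 * (ι ℂ x1 * (ι ℂ x2 * (ι ℂ x3 * ι ℂ x4)))
      = ιMulti ℂ 5 ![x0,x1,x2,x3,x4] := by
    rw [ιMulti_apply]
    simp [List.ofFn_succ, mul_assoc]
  rw [h, Fv, liftAlternating_apply_ιMulti]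
  rfl

theorem detv_zero (v : Module.Basis (Fin 5) ℂ (Fin 5 → ℂ)) (a b c d e : Fin 5)
    (h : decide (¬ Function.Injective ![a,b,c,d,e]) = true) :
    v.det ![v a, v b, v c, v d, v e] = 0 := by
  obtain ⟨i, j, heq, hne⟩ := Function.not_injective_iff.mp (of_decide_eq_true h)
  have hv : ![v a, v b, v c, v d, v e] = fun t => v (![a,b,c,d,e] t) := by
    funext t; fin_cases t <;> rfl
  rw [hv]
  exact v.det.map_eq_zero_of_eq _ (congrArg v heq) hne

theorem detv_perm (v : Module.Basis (Fin 5) ℂ (Fin 5 → ℂ)) (a b c d e : Fin 5)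
    (σ : Equiv.Perm (Fin 5)) (h : ![a,b,c,d,e] = ⇑σ) :
    v.det ![v a, v b, v c, v d, v e] = (Equiv.Perm.sign σ : ℤ) := by
  have hv : ![v a, v b, v c, v d, v e] = ⇑v ∘ ⇑σ := by
    funext t
    have := congrFun h t
    simp only [Function.comp_apply, ← this]
    fin_cases t <;> rfl
  rw [hv, v.det.map_perm, Module.Basis.det_self]
  rcases Int.units_eq_one_or (Equiv.Perm.sign σ) with hs | hs <;> rw [hs] <;> simp

theorem d03412 (v : Module.Basis (Fin 5) ℂ (Fin 5 → ℂ)) : v.det ![v 0, v 3, v 4, v 1, v 2] = 1 := by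
  rw [detv_perm v 0 3 4 1 2 ⟨![0,3,4,1,2], ![0,3,4,1,2], by decide, by decide⟩ rfl,
    show Equiv.Perm.sign (⟨![0,3,4,1,2], ![0,3,4,1,2], by decide, by decide⟩ : Equiv.Perm (Fin 5)) = 1 by decide]
  norm_num

theorem d04312 (v : Module.Basis (Fin 5) ℂ (Fin 5 → ℂ)) : v.det ![v 0, v 4, v 3, v 1, v 2] = -1 := by
  rw [detv_perm v 0 4 3 1 2 ⟨![0,4,3,1,2], ![0,3,4,2,1], by decide, by decide⟩ rfl,
    show Equiv.Perm.sign (⟨![0,4,3,1,2], ![0,3,4,2,1], by decide, by decide⟩ : Equiv.Perm (Fin 5)) = -1 by decide]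
  norm_num

theorem d02413 (v : Module.Basis (Fin 5) ℂ (Fin 5 → ℂ)) : v.det ![v 0, v 2, v 4, v 1, v 3] = -1 := by
  rw [detv_perm v 0 2 4 1 3 ⟨![0,2,4,1,3], ![0,3,1,4,2], by decide, by decide⟩ rfl,
    show Equiv.Perm.sign (⟨![0,2,4,1,3], ![0,3,1,4,2], by decide, by decide⟩ : Equiv.Perm (Fin 5)) = -1 by decide]
  norm_num

theorem d04213 (v : Module.Basis (Fin 5) ℂ (Fin 5 → ℂ)) : v.det ![v 0, v 4, v 2, v 1, v 3] = 1 := by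
  rw [detv_perm v 0 4 2 1 3 ⟨![0,4,2,1,3], ![0,3,2,4,1], by decide, by decide⟩ rfl,
    show Equiv.Perm.sign (⟨![0,4,2,1,3], ![0,3,2,4,1], by decide, by decide⟩ : Equiv.Perm (Fin 5)) = 1 by decide]
  norm_num

theorem d02314 (v : Module.Basis (Fin 5) ℂ (Fin 5 → ℂ)) : v.det ![v 0, v 2, v 3, v 1, v 4] = 1 := by
  rw [detv_perm v 0 2 3 1 4 ⟨![0,2,3,1,4], ![0,3,1,2,4], by decide, by decide⟩ rfl,
    show Equiv.Perm.sign (⟨![0,2,3,1,4], ![0,3,1,2,4], by decide, by decide⟩ : Equiv.Perm (Fin 5)) = 1 by decide]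
  norm_num

theorem d03214 (v : Module.Basis (Fin 5) ℂ (Fin 5 → ℂ)) : v.det ![v 0, v 3, v 2, v 1, v 4] = -1 := by
  rw [detv_perm v 0 3 2 1 4 ⟨![0,3,2,1,4], ![0,3,2,1,4], by decide, by decide⟩ rfl,
    show Equiv.Perm.sign (⟨![0,3,2,1,4], ![0,3,2,1,4], by decide, by decide⟩ : Equiv.Perm (Fin 5)) = -1 by decide]
  norm_num

theorem d01423 (v : Module.Basis (Fin 5) ℂ (Fin 5 → ℂ)) : v.det ![v 0, v 1, v 4, v 2, v 3] = 1 := by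
  rw [detv_perm v 0 1 4 2 3 ⟨![0,1,4,2,3], ![0,1,3,4,2], by decide, by decide⟩ rfl,
    show Equiv.Perm.sign (⟨![0,1,4,2,3], ![0,1,3,4,2], by decide, by decide⟩ : Equiv.Perm (Fin 5)) = 1 by decide]
  norm_num

theorem d04123 (v : Module.Basis (Fin 5) ℂ (Fin 5 → ℂ)) : v.det ![v 0, v 4, v 1, v 2, v 3] = -1 := by
  rw [detv_perm v 0 4 1 2 3 ⟨![0,4,1,2,3], ![0,2,3,4,1], by decide, by decide⟩ rfl,
    show Equiv.Perm.sign (⟨![0,4,1,2,3], ![0,2,3,4,1], by decide, by decide⟩ : Equiv.Perm (Fin 5)) = -1 by decide]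
  norm_num

theorem d01324 (v : Module.Basis (Fin 5) ℂ (Fin 5 → ℂ)) : v.det ![v 0, v 1, v 3, v 2, v 4] = -1 := by
  rw [detv_perm v 0 1 3 2 4 ⟨![0,1,3,2,4], ![0,1,3,2,4], by decide, by decide⟩ rfl,
    show Equiv.Perm.sign (⟨![0,1,3,2,4], ![0,1,3,2,4], by decide, by decide⟩ : Equiv.Perm (Fin 5)) = -1 by decide]
  norm_num

theorem d03124 (v : Module.Basis (Fin 5) ℂ (Fin 5 → ℂ)) : v.det ![v 0, v 3, v 1, v 2, v 4] = 1 := by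
  rw [detv_perm v 0 3 1 2 4 ⟨![0,3,1,2,4], ![0,2,3,1,4], by decide, by decide⟩ rfl,
    show Equiv.Perm.sign (⟨![0,3,1,2,4], ![0,2,3,1,4], by decide, by decide⟩ : Equiv.Perm (Fin 5)) = 1 by decide]
  norm_num

theorem d01234 (v : Module.Basis (Fin 5) ℂ (Fin 5 → ℂ)) : v.det ![v 0, v 1, v 2, v 3, v 4] = 1 := by
  rw [detv_perm v 0 1 2 3 4 ⟨![0,1,2,3,4], ![0,1,2,3,4], by decide, by decide⟩ rfl,
    show Equiv.Perm.sign (⟨![0,1,2,3,4], ![0,1,2,3,4], by decide, by decide⟩ : Equiv.Perm (Fin 5)) = 1 by decide]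
  norm_num

theorem d02134 (v : Module.Basis (Fin 5) ℂ (Fin 5 → ℂ)) : v.det ![v 0, v 2, v 1, v 3, v 4] = -1 := by
  rw [detv_perm v 0 2 1 3 4 ⟨![0,2,1,3,4], ![0,2,1,3,4], by decide, by decide⟩ rfl,
    show Equiv.Perm.sign (⟨![0,2,1,3,4], ![0,2,1,3,4], by decide, by decide⟩ : Equiv.Perm (Fin 5)) = -1 by decide]
  norm_num

theorem anticomm (x y : Fin 5 → ℂ) : ι ℂ y * ι ℂ x = -(ι ℂ x * ι ℂ y) := by
  have h := ι_sq_zero (R := ℂ) (x + y)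
  rw [map_add, add_mul, mul_add, mul_add, ι_sq_zero, ι_sq_zero] at h
  linear_combination (norm := noncomm_ring) h

theorem mem2 (x y : Fin 5 → ℂ) : ι ℂ x * ι ℂ y ∈ ⋀[ℂ]^2 (Fin 5 → ℂ) := by
  rw [exteriorPower, pow_two]
  exact Submodule.mul_mem_mul (LinearMap.mem_range_self _ x) (LinearMap.mem_range_self _ y)

theorem rep (v : Module.Basis (Fin 5) ℂ (Fin 5 → ℂ)) (z : ExteriorAlgebra ℂ (Fin 5 → ℂ))
    (hz : z ∈ ⋀[ℂ]^2 (Fin 5 → ℂ)) :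
    ∃ a : Fin 5 → Fin 5 → ℂ, z = ∑ i, ∑ j, a i j • (ι ℂ (v i) * ι ℂ (v j)) := by
  rw [exteriorPower, pow_two] at hz
  refine Submodule.mul_induction_on hz ?_ ?_
  · rintro m ⟨x, rfl⟩ n ⟨y, rfl⟩
    refine ⟨fun i j => v.repr x i * v.repr y j, ?_⟩
    conv_lhs => rw [← v.sum_repr x, ← v.sum_repr y]
    simp only [map_sum, map_smul, Finset.sum_mul, Finset.mul_sum, smul_mul_assoc,
      mul_smul_comm, Finset.smul_sum]
    rw [Finset.sum_comm]
    refine Finset.sum_congr rfl fun i _ => Finset.sum_congr rfl fun j _ => ?_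
    rw [smul_smul, mul_comm]
  · rintro x y ⟨a, rfl⟩ ⟨a', rfl⟩
    exact ⟨a + a', by simp [add_smul, Finset.sum_add_distrib]⟩

theorem topForm_ne_zero : topForm ≠ 0 := by
  intro h
  have h2 : Fv (Pi.basisFun ℂ (Fin 5)) topForm = 1 := by
    set s := Pi.basisFun ℂ (Fin 5)
    have h0 : ∀ i : Fin 5, Pi.single (i : Fin 5) (1:ℂ) = s i :=
      fun i => (Pi.basisFun_apply ℂ _ i).symm
    rw [topForm, h0 0, h0 1, h0 2, h0 3, h0 4, mul_assoc, mul_assoc, mul_assoc, Fv_eval]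
    have hs : ![s 0, s 1, s 2, s 3, s 4] = ⇑s := by
      funext t; fin_cases t <;> rfl
    rw [hs, Module.Basis.det_self]
  rw [h, map_zero] at h2
  exact zero_ne_one h2

theorem ker_lemma (v : Module.Basis (Fin 5) ℂ (Fin 5 → ℂ)) (w : Fin 5 → ℂ)
    (hw : ι ℂ (v 0) * ι ℂ w = 0) : w = v.repr w 0 • v 0 := by
  have hker : ∀ j k l : Fin 5, ∑ t, v.repr w t * v.det ![v 0, v t, v j, v k, v l] = 0 := by
    intro j k l
    have h1 : Fv v (ι ℂ (v 0) * (ι ℂ w * (ι ℂ (v j) * (ι ℂ (v k) * ι ℂ (v l))))) = 0 := by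
      rw [← mul_assoc, hw, zero_mul, map_zero]
    rw [← h1]
    conv_rhs => rw [← v.sum_repr w]
    simp only [map_sum, map_smul, Finset.mul_sum, Finset.sum_mul, smul_mul_assoc,
      mul_smul_comm, Fv_eval, smul_eq_mul]
  have hc1 : v.repr w 1 = 0 := by
    have h := hker 2 3 4
    simp only [Fin.sum_univ_five, detv_zero v 0 0 2 3 4 rfl, detv_zero v 0 2 2 3 4 rfl, detv_zero v 0 3 2 3 4 rfl, detv_zero v 0 4 2 3 4 rfl, d01234 v] at h
    linear_combination h
  have hc2 : v.repr w 2 = 0 := by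
    have h := hker 1 3 4
    simp only [Fin.sum_univ_five, detv_zero v 0 0 1 3 4 rfl, detv_zero v 0 1 1 3 4 rfl, detv_zero v 0 3 1 3 4 rfl, detv_zero v 0 4 1 3 4 rfl, d02134 v] at h
    linear_combination -h
  have hc3 : v.repr w 3 = 0 := by
    have h := hker 1 2 4
    simp only [Fin.sum_univ_five, detv_zero v 0 0 1 2 4 rfl, detv_zero v 0 1 1 2 4 rfl, detv_zero v 0 2 1 2 4 rfl, detv_zero v 0 4 1 2 4 rfl, d03124 v] at h
    linear_combination h
  have hc4 : v.repr w 4 = 0 := by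
    have h := hker 1 2 3
    simp only [Fin.sum_univ_five, detv_zero v 0 0 1 2 3 rfl, detv_zero v 0 1 1 2 3 rfl, detv_zero v 0 2 1 2 3 rfl, detv_zero v 0 3 1 2 3 rfl, d04123 v] at h
    linear_combination -h
  have hsum := v.sum_repr w
  rw [Fin.sum_univ_five, hc1, hc2, hc3, hc4] at hsum
  simp only [zero_smul, add_zero] at hsum
  exact hsum.symm

theorem key (v : Module.Basis (Fin 5) ℂ (Fin 5 → ℂ)) (z : ExteriorAlgebra ℂ (Fin 5 → ℂ))
    (hz : z ∈ ⋀[ℂ]^2 (Fin 5 → ℂ))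
    (h0 : ∀ η ∈ ⋀[ℂ]^2 (Fin 5 → ℂ), ι ℂ (v 0) * z * η = 0) :
    ∃ w : Fin 5 → ℂ, z = ι ℂ (v 0) * ι ℂ w := by
  obtain ⟨a, ha⟩ := rep v z hz
  have hexp : ∀ k l : Fin 5, ∑ i, ∑ j, a i j * v.det ![v 0, v i, v j, v k, v l] = 0 := by
    intro k l
    have h1 : Fv v (ι ℂ (v 0) * z * (ι ℂ (v k) * ι ℂ (v l))) = 0 := by
      rw [h0 _ (mem2 _ _), map_zero]
    rw [← h1, ha]
    simp only [Finset.mul_sum, Finset.sum_mul, smul_mul_assoc, mul_smul_comm, map_sum,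
      map_smul, mul_assoc, Fv_eval, smul_eq_mul]
  have hsym34 : a 3 4 = a 4 3 := by
    have h := hexp 1 2
    simp only [Fin.sum_univ_five, detv_zero v 0 0 0 1 2 rfl, detv_zero v 0 0 1 1 2 rfl, detv_zero v 0 0 2 1 2 rfl, detv_zero v 0 0 3 1 2 rfl, detv_zero v 0 0 4 1 2 rfl, detv_zero v 0 1 0 1 2 rfl, detv_zero v 0 1 1 1 2 rfl, detv_zero v 0 1 2 1 2 rfl, detv_zero v 0 1 3 1 2 rfl, detv_zero v 0 1 4 1 2 rfl, detv_zero v 0 2 0 1 2 rfl, detv_zero v 0 2 1 1 2 rfl, detv_zero v 0 2 2 1 2 rfl, detv_zero v 0 2 3 1 2 rfl, detv_zero v 0 2 4 1 2 rfl, detv_zero v 0 3 0 1 2 rfl, detv_zero v 0 3 1 1 2 rfl, detv_zero v 0 3 2 1 2 rfl, detv_zero v 0 3 3 1 2 rfl, detv_zero v 0 4 0 1 2 rfl, detv_zero v 0 4 1 1 2 rfl, detv_zero v 0 4 2 1 2 rfl, detv_zero v 0 4 4 1 2 rfl, d03412 v, d04312 v] at h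
    linear_combination h
  have hsym24 : a 2 4 = a 4 2 := by
    have h := hexp 1 3
    simp only [Fin.sum_univ_five, detv_zero v 0 0 0 1 3 rfl, detv_zero v 0 0 1 1 3 rfl, detv_zero v 0 0 2 1 3 rfl, detv_zero v 0 0 3 1 3 rfl, detv_zero v 0 0 4 1 3 rfl, detv_zero v 0 1 0 1 3 rfl, detv_zero v 0 1 1 1 3 rfl, detv_zero v 0 1 2 1 3 rfl, detv_zero v 0 1 3 1 3 rfl, detv_zero v 0 1 4 1 3 rfl, detv_zero v 0 2 0 1 3 rfl, detv_zero v 0 2 1 1 3 rfl, detv_zero v 0 2 2 1 3 rfl, detv_zero v 0 2 3 1 3 rfl, detv_zero v 0 3 0 1 3 rfl, detv_zero v 0 3 1 1 3 rfl, detv_zero v 0 3 2 1 3 rfl, detv_zero v 0 3 3 1 3 rfl, detv_zero v 0 3 4 1 3 rfl, detv_zero v 0 4 0 1 3 rfl, detv_zero v 0 4 1 1 3 rfl, detv_zero v 0 4 3 1 3 rfl, detv_zero v 0 4 4 1 3 rfl, d02413 v, d04213 v] at h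
    linear_combination -h
  have hsym23 : a 2 3 = a 3 2 := by
    have h := hexp 1 4
    simp only [Fin.sum_univ_five, detv_zero v 0 0 0 1 4 rfl, detv_zero v 0 0 1 1 4 rfl, detv_zero v 0 0 2 1 4 rfl, detv_zero v 0 0 3 1 4 rfl, detv_zero v 0 0 4 1 4 rfl, detv_zero v 0 1 0 1 4 rfl, detv_zero v 0 1 1 1 4 rfl, detv_zero v 0 1 2 1 4 rfl, detv_zero v 0 1 3 1 4 rfl, detv_zero v 0 1 4 1 4 rfl, detv_zero v 0 2 0 1 4 rfl, detv_zero v 0 2 1 1 4 rfl, detv_zero v 0 2 2 1 4 rfl, detv_zero v 0 2 4 1 4 rfl, detv_zero v 0 3 0 1 4 rfl, detv_zero v 0 3 1 1 4 rfl, detv_zero v 0 3 3 1 4 rfl, detv_zero v 0 3 4 1 4 rfl, detv_zero v 0 4 0 1 4 rfl, detv_zero v 0 4 1 1 4 rfl, detv_zero v 0 4 2 1 4 rfl, detv_zero v 0 4 3 1 4 rfl, detv_zero v 0 4 4 1 4 rfl, d02314 v, d03214 v] at h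
    linear_combination h
  have hsym14 : a 1 4 = a 4 1 := by
    have h := hexp 2 3
    simp only [Fin.sum_univ_five, detv_zero v 0 0 0 2 3 rfl, detv_zero v 0 0 1 2 3 rfl, detv_zero v 0 0 2 2 3 rfl, detv_zero v 0 0 3 2 3 rfl, detv_zero v 0 0 4 2 3 rfl, detv_zero v 0 1 0 2 3 rfl, detv_zero v 0 1 1 2 3 rfl, detv_zero v 0 1 2 2 3 rfl, detv_zero v 0 1 3 2 3 rfl, detv_zero v 0 2 0 2 3 rfl, detv_zero v 0 2 1 2 3 rfl, detv_zero v 0 2 2 2 3 rfl, detv_zero v 0 2 3 2 3 rfl, detv_zero v 0 2 4 2 3 rfl, detv_zero v 0 3 0 2 3 rfl, detv_zero v 0 3 1 2 3 rfl, detv_zero v 0 3 2 2 3 rfl, detv_zero v 0 3 3 2 3 rfl, detv_zero v 0 3 4 2 3 rfl, detv_zero v 0 4 0 2 3 rfl, detv_zero v 0 4 2 2 3 rfl, detv_zero v 0 4 3 2 3 rfl, detv_zero v 0 4 4 2 3 rfl, d01423 v, d04123 v] at h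
    linear_combination h
  have hsym13 : a 1 3 = a 3 1 := by
    have h := hexp 2 4
    simp only [Fin.sum_univ_five, detv_zero v 0 0 0 2 4 rfl, detv_zero v 0 0 1 2 4 rfl, detv_zero v 0 0 2 2 4 rfl, detv_zero v 0 0 3 2 4 rfl, detv_zero v 0 0 4 2 4 rfl, detv_zero v 0 1 0 2 4 rfl, detv_zero v 0 1 1 2 4 rfl, detv_zero v 0 1 2 2 4 rfl, detv_zero v 0 1 4 2 4 rfl, detv_zero v 0 2 0 2 4 rfl, detv_zero v 0 2 1 2 4 rfl, detv_zero v 0 2 2 2 4 rfl, detv_zero v 0 2 3 2 4 rfl, detv_zero v 0 2 4 2 4 rfl, detv_zero v 0 3 0 2 4 rfl, detv_zero v 0 3 2 2 4 rfl, detv_zero v 0 3 3 2 4 rfl, detv_zero v 0 3 4 2 4 rfl, detv_zero v 0 4 0 2 4 rfl, detv_zero v 0 4 1 2 4 rfl, detv_zero v 0 4 2 2 4 rfl, detv_zero v 0 4 3 2 4 rfl, detv_zero v 0 4 4 2 4 rfl, d01324 v, d03124 v] at h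
    linear_combination -h
  have hsym12 : a 1 2 = a 2 1 := by
    have h := hexp 3 4
    simp only [Fin.sum_univ_five, detv_zero v 0 0 0 3 4 rfl, detv_zero v 0 0 1 3 4 rfl, detv_zero v 0 0 2 3 4 rfl, detv_zero v 0 0 3 3 4 rfl, detv_zero v 0 0 4 3 4 rfl, detv_zero v 0 1 0 3 4 rfl, detv_zero v 0 1 1 3 4 rfl, detv_zero v 0 1 3 3 4 rfl, detv_zero v 0 1 4 3 4 rfl, detv_zero v 0 2 0 3 4 rfl, detv_zero v 0 2 2 3 4 rfl, detv_zero v 0 2 3 3 4 rfl, detv_zero v 0 2 4 3 4 rfl, detv_zero v 0 3 0 3 4 rfl, detv_zero v 0 3 1 3 4 rfl, detv_zero v 0 3 2 3 4 rfl, detv_zero v 0 3 3 3 4 rfl, detv_zero v 0 3 4 3 4 rfl, detv_zero v 0 4 0 3 4 rfl, detv_zero v 0 4 1 3 4 rfl, detv_zero v 0 4 2 3 4 rfl, detv_zero v 0 4 3 3 4 rfl, detv_zero v 0 4 4 3 4 rfl, d01234 v, d02134 v] at h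
    linear_combination h
  refine ⟨(a 0 1 - a 1 0) • v 1 + (a 0 2 - a 2 0) • v 2 +
    (a 0 3 - a 3 0) • v 3 + (a 0 4 - a 4 0) • v 4, ?_⟩
  rw [ha]
  simp only [Fin.sum_univ_five, map_add, map_smul, mul_add, mul_smul_comm, ι_sq_zero,
    anticomm (v 0) (v 1), anticomm (v 0) (v 2), anticomm (v 0) (v 3), anticomm (v 0) (v 4),
    anticomm (v 1) (v 2), anticomm (v 1) (v 3), anticomm (v 1) (v 4),
    anticomm (v 2) (v 3), anticomm (v 2) (v 4), anticomm (v 3) (v 4)]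
  rw [hsym12, hsym13, hsym14, hsym23, hsym24, hsym34]
  module

theorem exists_basis_head (u : Fin 5 → ℂ) (hu : u ≠ 0) :
    ∃ v : Module.Basis (Fin 5) ℂ (Fin 5 → ℂ), v 0 = u := by
  have hsing : LinearIndepOn ℂ id ({u} : Set (Fin 5 → ℂ)) :=
    (linearIndepOn_singleton_iff ℂ).mpr hu
  let B := Module.Basis.extend hsing
  haveI : Fintype ↥(hsing.extend (Set.subset_univ {u})) := FiniteDimensional.fintypeBasisIndex B
  have humem : u ∈ hsing.extend (Set.subset_univ {u}) :=
    hsing.subset_extend _ rfl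
  have hcard : Fintype.card ↥(hsing.extend (Set.subset_univ {u})) = 5 := by
    have h1 := Module.finrank_eq_card_basis B
    have h2 := Module.finrank_eq_card_basis (Pi.basisFun ℂ (Fin 5))
    rw [h1] at h2
    simp at h2
    rw [← Nat.card_coe_set_eq, Nat.card_eq_fintype_card] at h2
    omega
  let e0 := Fintype.equivFinOfCardEq hcard
  let e := e0.trans (Equiv.swap (e0 ⟨u, humem⟩) 0)
  refine ⟨B.reindex e, ?_⟩
  rw [Module.Basis.reindex_apply]
  have he : e.symm 0 = ⟨u, humem⟩ := by
    simp [e, Equiv.symm_trans_apply, Equiv.symm_swap, Equiv.swap_apply_right]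
  rw [he]
  exact Module.Basis.extend_apply_self hsing ⟨u, humem⟩

/-- For every nonzero `u ∈ ℂ⁵`, the radical of the symmetric bilinear form
`b_u` on `Λ²ℂ⁵` (defined by `u ∧ ω ∧ η = b_u(ω, η) · (e₁ ∧ ⋯ ∧ e₅)`) equals
the subspace `u ∧ ℂ⁵ = {u ∧ w : w ∈ ℂ⁵}`, which is 4-dimensional; in
particular every `ω` in the radical satisfies `ω ∧ ω = 0`, i.e. lies in the
base locus of the Pfaffian system. -/
theorem pfaffian_quadric_radical (u : Fin 5 → ℂ) (hu : u ≠ 0)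
    (b : (⋀[ℂ]^2 (Fin 5 → ℂ)) →ₗ[ℂ] (⋀[ℂ]^2 (Fin 5 → ℂ)) →ₗ[ℂ] ℂ)
    (hb : ∀ ω η : ⋀[ℂ]^2 (Fin 5 → ℂ),
      ι ℂ u * (ω : ExteriorAlgebra ℂ (Fin 5 → ℂ)) *
          (η : ExteriorAlgebra ℂ (Fin 5 → ℂ)) =
        b ω η • topForm) :
    ({ω : ⋀[ℂ]^2 (Fin 5 → ℂ) | ∀ η : ⋀[ℂ]^2 (Fin 5 → ℂ), b ω η = 0} =
      {ω : ⋀[ℂ]^2 (Fin 5 → ℂ) |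
        ∃ w : Fin 5 → ℂ, (ω : ExteriorAlgebra ℂ (Fin 5 → ℂ)) = ι ℂ u * ι ℂ w}) ∧
    Module.finrank ℂ (LinearMap.range (wedgeWith u)) = 4 ∧
    ∀ ω : ⋀[ℂ]^2 (Fin 5 → ℂ), (∀ η : ⋀[ℂ]^2 (Fin 5 → ℂ), b ω η = 0) →
      (ω : ExteriorAlgebra ℂ (Fin 5 → ℂ)) * (ω : ExteriorAlgebra ℂ (Fin 5 → ℂ)) = 0 := by
  obtain ⟨v, hv0⟩ := exists_basis_head u hu
  have radiff : ∀ ω : ⋀[ℂ]^2 (Fin 5 → ℂ), (∀ η : ⋀[ℂ]^2 (Fin 5 → ℂ), b ω η = 0) ↔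
      ∃ w : Fin 5 → ℂ, (ω : ExteriorAlgebra ℂ (Fin 5 → ℂ)) = ι ℂ u * ι ℂ w := by
    intro ω
    constructor
    · intro h
      have h0 : ∀ η ∈ ⋀[ℂ]^2 (Fin 5 → ℂ),
          ι ℂ (v 0) * (ω : ExteriorAlgebra ℂ (Fin 5 → ℂ)) * η = 0 := by
        intro η hm
        have h1 := hb ω ⟨η, hm⟩
        rw [h ⟨η, hm⟩, zero_smul] at h1
        rw [hv0]
        exact h1
      obtain ⟨w, hw⟩ := key v _ ω.2 h0
      rw [hv0] at hw
      exact ⟨w, hw⟩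
    · rintro ⟨w, hw⟩ η
      have h2 := hb ω η
      rw [hw, ← mul_assoc, ι_sq_zero, zero_mul, zero_mul] at h2
      rcases smul_eq_zero.mp h2.symm with h3 | h3
      · exact h3
      · exact absurd h3 topForm_ne_zero
  refine ⟨?_, ?_, ?_⟩
  · ext ω
    simp only [Set.mem_setOf_eq]
    exact radiff ω
  · have hker_eq : LinearMap.ker (wedgeWith u) = ℂ ∙ u := by
      ext w
      simp only [LinearMap.mem_ker, Submodule.mem_span_singleton]
      constructor
      · intro h
        have h' : ι ℂ (v 0) * ι ℂ w = 0 := by rw [hv0]; exact h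
        have h2 := ker_lemma v w h'
        exact ⟨v.repr w 0, by rw [← hv0]; exact h2.symm⟩
      · rintro ⟨c, rfl⟩
        show ι ℂ u * ι ℂ (c • u) = 0
        rw [map_smul, mul_smul_comm, ι_sq_zero, smul_zero]
    have hrn := LinearMap.finrank_range_add_finrank_ker (wedgeWith u)
    rw [hker_eq, finrank_span_singleton hu] at hrn
    have h5 : Module.finrank ℂ (Fin 5 → ℂ) = 5 := by
      have := Module.finrank_eq_card_basis (Pi.basisFun ℂ (Fin 5))
      simpa using this
    rw [h5] at hrn
    omega
  · intro ω h
    obtain ⟨w, hw⟩ := (radiff ω).mp h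
    rw [hw, mul_assoc, ← mul_assoc (ι ℂ w), anticomm u w]
    simp only [neg_mul, mul_neg, mul_assoc, ι_sq_zero, mul_zero, neg_zero]
end
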